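/- There exists a centrally symmetric orientable triangulated closed surface with exactly 18 vertices, 66 edges, 44 triangles, and Euler characteristic −4 (a triangulated orientable surface of genus 2). -/

import Mathlib

/-- A simple graph is a single cycle iff it is connected and 2-regular. -/
def IsSingleCycle {α : Type*} (G : SimpleGraph α) : Prop :=
  G.Connected ∧ ∀ a : α, (G.neighborSet a).ncard = 2

section Tri

variable {V : Type*} [DecidableEq V]

/-- The edges of a family of simplices: the 2-element subsets of its members. -/
def triEdges (K : Finset (Finset V)) : Finset (Finset V) :=
  K.biUnion fun T => T.powersetCard 2

/-- The underlying graph of a family of simplices. -/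
def cplxGraph (K : Finset (Finset V)) : SimpleGraph V where
  Adj a b := a ≠ b ∧ ∃ T ∈ K, a ∈ T ∧ b ∈ T
  symm := by
    constructor
    rintro a b ⟨h, T, hT, ha, hb⟩
    exact ⟨h.symm, T, hT, hb, ha⟩
  loopless := ⟨fun a h => h.1 rfl⟩

/-- The link graph of a vertex `v`: `a,b` are joined iff `{v,a,b}` is a simplex. -/
def linkGraph (K : Finset (Finset V)) (v : V) : SimpleGraph V where
  Adj a b := a ≠ b ∧ a ≠ v ∧ b ≠ v ∧ ({v, a, b} : Finset V) ∈ K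
  symm := by
    constructor
    rintro a b ⟨h1, h2, h3, h4⟩
    refine ⟨h1.symm, h3, h2, ?_⟩
    rwa [Finset.pair_comm b a]
  loopless := ⟨fun a h => h.1 rfl⟩

/-- Euler characteristic of a triangle family on vertex set `W`. -/
def eulerCharOn (W : Finset V) (K : Finset (Finset V)) : ℤ :=
  (W.card : ℤ) - ((triEdges K).card : ℤ) + (K.card : ℤ)

/-- `K` is a triangulated closed surface on the vertex set `W`. -/
def IsTriSurfaceOn (W : Finset V) (K : Finset (Finset V)) : Prop :=
  (∀ T ∈ K, T.card = 3 ∧ T ⊆ W) ∧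
  ((cplxGraph K).induce (W : Set V)).Connected ∧
  (∀ e ∈ triEdges K, (K.filter fun T => e ⊆ T).card = 2) ∧
  (∀ v ∈ W, IsSingleCycle ((linkGraph K v).induce ((cplxGraph K).neighborSet v)))

/-- `K` is centrally symmetric on vertex set `W` under the involution `σ`. -/
def IsCSOn (W : Finset V) (K : Finset (Finset V)) (σ : V → V) : Prop :=
  Set.MapsTo σ (W : Set V) (W : Set V) ∧
  (∀ v ∈ W, σ (σ v) = v) ∧
  (∀ T ∈ K, T.image σ ∈ K) ∧
  (∀ v ∈ W, σ v ≠ v) ∧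
  (∀ e ∈ triEdges K, e.image σ ≠ e) ∧
  (∀ T ∈ K, T.image σ ≠ T)

/-- Orientability of a triangulated surface. -/
def IsOrientableTri (K : Finset (Finset V)) : Prop :=
  ∃ ori : Finset V → V → V → Bool,
    (∀ T ∈ K, ∀ a ∈ T, ∀ b ∈ T, a ≠ b → ori T a b = !ori T b a) ∧
    (∀ T ∈ K, ∀ a b c : V, a ≠ b → b ≠ c → a ≠ c → T = {a, b, c} → ori T a b = ori T b c) ∧
    (∀ T ∈ K, ∀ T' ∈ K, T ≠ T' → ∀ a b : V, a ≠ b → a ∈ T → b ∈ T → a ∈ T' → b ∈ T' →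
      ori T a b = ori T' b a)

end Tri


set_option maxRecDepth 40000

section Aux
open SimpleGraph

instance cplxAdjDec {V : Type*} [DecidableEq V] (K : Finset (Finset V)) :
    DecidableRel (cplxGraph K).Adj :=
  fun a b => inferInstanceAs (Decidable (a ≠ b ∧ ∃ T ∈ K, a ∈ T ∧ b ∈ T))

instance linkAdjDec {V : Type*} [DecidableEq V] (K : Finset (Finset V)) (v : V) :
    DecidableRel (linkGraph K v).Adj :=
  fun a b => inferInstanceAs (Decidable (a ≠ b ∧ a ≠ v ∧ b ≠ v ∧ ({v, a, b} : Finset V) ∈ K))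

instance nbrDec {V : Type*} [DecidableEq V] (K : Finset (Finset V)) (v : V) :
    DecidablePred (· ∈ (cplxGraph K).neighborSet v) :=
  fun a => inferInstanceAs (Decidable ((cplxGraph K).Adj v a))

instance coeUnivDec {V : Type*} [DecidableEq V] [Fintype V] :
    DecidablePred (· ∈ ((Finset.univ : Finset V) : Set V)) :=
  fun a => inferInstanceAs (Decidable (a ∈ (Finset.univ : Finset V)))

instance induceAdjDec {V : Type*} (G : SimpleGraph V) [DecidableRel G.Adj] (s : Set V) :
    DecidableRel (G.induce s).Adj :=
  fun a b => inferInstanceAs (Decidable (G.Adj a.val b.val))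

lemma connected_of_rank {α : Type*} (G : SimpleGraph α) (r : α) (rk : α → ℕ)
    (h : ∀ a, a = r ∨ ∃ b, G.Adj b a ∧ rk b < rk a) : G.Connected := by
  have key : ∀ n a, rk a ≤ n → G.Reachable r a := by
    intro n
    induction n with
    | zero =>
      intro a ha
      rcases h a with rfl | ⟨b, _, hlt⟩
      · exact SimpleGraph.Reachable.refl _
      · omega
    | succ n ih =>
      intro a ha
      rcases h a with rfl | ⟨b, hb, hlt⟩
      · exact SimpleGraph.Reachable.refl _
      · exact (ih b (by omega)).trans hb.reachable
  have : Nonempty α := ⟨r⟩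
  exact ⟨fun u v => (key (rk u) u le_rfl).symm.trans (key (rk v) v le_rfl)⟩

lemma isSingleCycle_of {α : Type*} (G : SimpleGraph α) (r : α) (rk : α → ℕ)
    (h : ∀ a, a = r ∨ ∃ b, G.Adj b a ∧ rk b < rk a)
    (h2 : ∀ a, ∃ b c, b ≠ c ∧ ∀ d, G.Adj a d ↔ (d = b ∨ d = c)) :
    IsSingleCycle G := by
  refine ⟨connected_of_rank G r rk h, fun a => ?_⟩
  obtain ⟨b, c, hbc, hadj⟩ := h2 a
  have hset : G.neighborSet a = {b, c} := Set.ext fun d => by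
    simp only [SimpleGraph.mem_neighborSet, Set.mem_insert_iff, Set.mem_singleton_iff]
    exact hadj d
  rw [hset, Set.ncard_pair hbc]

end Aux

def LK : List (Finset (Fin 18)) := [({0, 2, 4} : Finset (Fin 18)), ({0, 2, 10} : Finset (Fin 18)), ({0, 4, 14} : Finset (Fin 18)), ({0, 10, 12} : Finset (Fin 18)), ({0, 12, 14} : Finset (Fin 18)), ({1, 3, 9} : Finset (Fin 18)), ({1, 3, 13} : Finset (Fin 18)), ({1, 5, 7} : Finset (Fin 18)), ({1, 5, 11} : Finset (Fin 18)), ({1, 7, 17} : Finset (Fin 18)), ({1, 9, 11} : Finset (Fin 18)), ({1, 13, 15} : Finset (Fin 18)), ({1, 15, 17} : Finset (Fin 18)), ({2, 3, 7} : Finset (Fin 18)), ({2, 3, 8} : Finset (Fin 18)), ({2, 4, 6} : Finset (Fin 18)), ({2, 6, 7} : Finset (Fin 18)), ({2, 8, 14} : Finset (Fin 18)), ({2, 10, 14} : Finset (Fin 18)), ({3, 5, 6} : Finset (Fin 18)), ({3, 5, 9} : Finset (Fin 18)), ({3, 6, 8} : Finset (Fin 18)), ({3, 7, 13} : Finset (Fin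 18)), ({4, 6, 10} : Finset (Fin 18)), ({4, 8, 14} : Finset (Fin 18)), ({4, 8, 16} : Finset (Fin 18)), ({4, 10, 12} : Finset (Fin 18)), ({4, 12, 16} : Finset (Fin 18)), ({5, 6, 7} : Finset (Fin 18)), ({5, 9, 13} : Finset (Fin 18)), ({5, 11, 17} : Finset (Fin 18)), ({5, 13, 17} : Finset (Fin 18)), ({6, 8, 10} : Finset (Fin 18)), ({7, 13, 17} : Finset (Fin 18)), ({8, 10, 16} : Finset (Fin 18)), ({9, 11, 13} : Finset (Fin 18)), ({10, 14, 16} : Finset (Fin 18)), ({11, 12, 16} : Finset (Fin 18)), ({11, 12, 17} : Finset (Fin 18)), ({11, 13, 15} : Finset (Fin 18)), ({11, 15, 16} : Finset (Fin 18)), ({12, 14, 15} : Finset (Fin 18)), ({12, 15, 17} : Finset (Fin 18)), ({14, 15, 16} : Finset (Fin 18))]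

def Kdef : Finset (Finset (Fin 18)) := ⟨(LK : Multiset (Finset (Fin 18))), by decide⟩

def EL : List (Finset (Fin 18)) := [({0, 2} : Finset (Fin 18)), ({0, 4} : Finset (Fin 18)), ({0, 10} : Finset (Fin 18)), ({0, 12} : Finset (Fin 18)), ({0, 14} : Finset (Fin 18)), ({1, 3} : Finset (Fin 18)), ({1, 5} : Finset (Fin 18)), ({1, 7} : Finset (Fin 18)), ({1, 9} : Finset (Fin 18)), ({1, 11} : Finset (Fin 18)), ({1, 13} : Finset (Fin 18)), ({1, 15} : Finset (Fin 18)), ({1, 17} : Finset (Fin 18)), ({2, 3} : Finset (Fin 18)), ({2, 4} : Finset (Fin 18)), ({2, 6} : Finset (Fin 18)), ({2, 7} : Finset (Fin 18)), ({2, 8} : Finset (Fin 18)), ({2, 10} : Finset (Fin 18)), ({2, 14} : Finset (Fin 18)), ({3, 5} : Finset (Fin 18)), ({3, 6} : Finset (Fin 18)), ({3, 7} : Finset (Fin 18)), ({3, 8} : Finset (Fin 18)), ({3, 9} : Finset (Fin 18)), ({3, 13} : Finset (Fin 18)), ({4, 6} : Finset (Fin 18)), ({4, 8} : Finset (Fin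 18)), ({4, 10} : Finset (Fin 18)), ({4, 12} : Finset (Fin 18)), ({4, 14} : Finset (Fin 18)), ({4, 16} : Finset (Fin 18)), ({5, 6} : Finset (Fin 18)), ({5, 7} : Finset (Fin 18)), ({5, 9} : Finset (Fin 18)), ({5, 11} : Finset (Fin 18)), ({5, 13} : Finset (Fin 18)), ({5, 17} : Finset (Fin 18)), ({6, 7} : Finset (Fin 18)), ({6, 8} : Finset (Fin 18)), ({6, 10} : Finset (Fin 18)), ({7, 13} : Finset (Fin 18)), ({7, 17} : Finset (Fin 18)), ({8, 10} : Finset (Fin 18)), ({8, 14} : Finset (Fin 18)), ({8, 16} : Finset (Fin 18)), ({9, 11} : Finset (Fin 18)), ({9, 13} : Finset (Fin 18)), ({10, 12} : Finset (Fin 18)), ({10, 14} : Finset (Fin 18)), ({10, 16} : Finset (Fin 18)), ({11, 12} : Finset (Fin 18)), ({11, 13} : Finset (Fin 18)), ({11, 15} : Finset (Fin 18)), ({11, 16} : Finset (Fin 18)), ({11, 17} : Finset (Fin 18)), ({12, 14} : Finset (Fin 18)), ({12, 15} : Finset (Fin 18)), ({12, 16} : Finset (Fin 18)), ({12, 17}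 : Finset (Fin 18)), ({13, 15} : Finset (Fin 18)), ({13, 17} : Finset (Fin 18)), ({14, 15} : Finset (Fin 18)), ({14, 16} : Finset (Fin 18)), ({15, 16} : Finset (Fin 18)), ({15, 17} : Finset (Fin 18))]

def Edef : Finset (Finset (Fin 18)) := ⟨(EL : Multiset (Finset (Fin 18))), by decide⟩

def oriList : List (Fin 18 × Fin 18 × Fin 18) := [(12,15,17), (3,8,6), (0,2,4), (9,13,11), (1,5,7), (10,16,14), (9,3,5), (0,14,12), (13,5,17), (4,8,14), (11,13,15), (2,6,4), (10,4,6), (1,15,13), (0,4,14), (9,5,13), (4,16,8), (13,17,7), (2,14,8), (11,17,5), (10,12,4), (1,13,3), (0,10,2), (9,11,1), (3,13,7), (12,16,4), (2,3,7), (11,16,12), (11,15,16), (2,7,6), (1,11,5), (10,14,2), (11,12,17), (2,8,3), (9,1,3), (0,12,10), (12,14,15), (3,6,5), (10,6,8), (1,17,15), (5,6,7), (14,16,15), (1,7,17), (10,8,16)]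

def oriFun : Finset (Fin 18) → Fin 18 → Fin 18 → Bool := fun T a b =>
  oriList.any fun p =>
    decide (T = ({p.1, p.2.1, p.2.2} : Finset (Fin 18))) &&
      ((a == p.1 && b == p.2.1) || (a == p.2.1 && b == p.2.2) || (a == p.2.2 && b == p.1))

lemma mem_LK {T : Finset (Fin 18)} (h : T ∈ Kdef) : T ∈ LK := by
  simpa [Kdef] using h

lemma ballK {P : Finset (Fin 18) → Prop} [DecidablePred P]
    (hall : (LK.all fun x => decide (P x)) = true) : ∀ x ∈ Kdef, P x :=
  fun x hx => of_decide_eq_true (List.all_eq_true.mp hall x (mem_LK hx))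

lemma ballK2 {Q : Finset (Fin 18) → Finset (Fin 18) → Prop} [∀ T T', Decidable (Q T T')]
    (hall : (LK.all fun T => LK.all fun T' => decide (Q T T')) = true) :
    ∀ T ∈ Kdef, ∀ T' ∈ Kdef, Q T T' :=
  fun T hT T' hT' => of_decide_eq_true
    (List.all_eq_true.mp (List.all_eq_true.mp hall T (mem_LK hT)) T' (mem_LK hT'))

lemma card2_subset {α : Type*} [DecidableEq α] {e : Finset α} {x y z : α}
    (h2 : e.card = 2) (hsub : e ⊆ ({x, y, z} : Finset α)) :
    e = {x, y} ∨ e = {x, z} ∨ e = {y, z} := by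
  obtain ⟨a, b, hab, rfl⟩ := Finset.card_eq_two.mp h2
  have ha := hsub (Finset.mem_insert_self a {b})
  have hb := hsub (Finset.mem_insert_of_mem (Finset.mem_singleton_self b))
  simp only [Finset.mem_insert, Finset.mem_singleton] at ha hb
  rcases ha with rfl | rfl | rfl <;> rcases hb with rfl | rfl | rfl <;>
    first
      | exact absurd rfl hab
      | exact Or.inl rfl
      | exact Or.inl (Finset.pair_comm _ _)
      | exact Or.inr (Or.inl rfl)
      | exact Or.inr (Or.inl (Finset.pair_comm _ _))
      | exact Or.inr (Or.inr rfl)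
      | exact Or.inr (Or.inr (Finset.pair_comm _ _))

def Ltri : List (Fin 18 × Fin 18 × Fin 18) := [(0,2,4), (0,2,10), (0,4,14), (0,10,12), (0,12,14), (1,3,9), (1,3,13), (1,5,7), (1,5,11), (1,7,17), (1,9,11), (1,13,15), (1,15,17), (2,3,7), (2,3,8), (2,4,6), (2,6,7), (2,8,14), (2,10,14), (3,5,6), (3,5,9), (3,6,8), (3,7,13), (4,6,10), (4,8,14), (4,8,16), (4,10,12), (4,12,16), (5,6,7), (5,9,13), (5,11,17), (5,13,17), (6,8,10), (7,13,17), (8,10,16), (9,11,13), (10,14,16), (11,12,16), (11,12,17), (11,13,15), (11,15,16), (12,14,15), (12,15,17), (14,15,16)]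

lemma LKmap : LK = Ltri.map (fun p => ({p.1, p.2.1, p.2.2} : Finset (Fin 18))) := by decide

set_option maxHeartbeats 1000000 in
lemma triE_eq : triEdges Kdef = Edef := by
  apply Finset.Subset.antisymm
  · intro e he
    rw [triEdges, Finset.mem_biUnion] at he
    obtain ⟨T, hT, heT⟩ := he
    rw [Finset.mem_powersetCard] at heT
    have hTL : T ∈ Ltri.map (fun p => ({p.1, p.2.1, p.2.2} : Finset (Fin 18))) :=
      LKmap ▸ mem_LK hT
    obtain ⟨p, hp, rfl⟩ := List.mem_map.mp hTL
    have h3 := of_decide_eq_true (List.all_eq_true.mp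
      (show (Ltri.all fun p => decide (({p.1, p.2.1} : Finset (Fin 18)) ∈ Edef ∧
        ({p.1, p.2.2} : Finset (Fin 18)) ∈ Edef ∧
        ({p.2.1, p.2.2} : Finset (Fin 18)) ∈ Edef)) = true by decide) p hp)
    rcases card2_subset heT.2 heT.1 with rfl | rfl | rfl
    · exact h3.1
    · exact h3.2.1
    · exact h3.2.2
  · intro e he
    have heL : e ∈ EL := by simpa [Edef] using he
    have h := List.all_eq_true.mp
      (show (EL.all fun e => LK.any fun T => decide (e ∈ T.powersetCard 2)) = true by decide)
      e heL
    obtain ⟨T, hT, he2⟩ := List.any_eq_true.mp h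
    exact Finset.mem_biUnion.mpr ⟨T, by simpa [Kdef] using hT, of_decide_eq_true he2⟩

lemma ballE {P : Finset (Fin 18) → Prop} [DecidablePred P]
    (hall : (EL.all fun e => decide (P e)) = true) :
    ∀ e ∈ triEdges Kdef, P e := by
  intro e he
  rw [triE_eq] at he
  exact of_decide_eq_true (List.all_eq_true.mp hall e (by simpa [Edef] using he))

set_option maxHeartbeats 1000000 in
lemma hFaces : ∀ T ∈ Kdef, T.card = 3 ∧ T ⊆ (Finset.univ : Finset (Fin 18)) :=
  ballK (by decide)

set_option maxHeartbeats 1000000 in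
lemma hEdge2 : ∀ e ∈ triEdges Kdef, (Kdef.filter fun T => e ⊆ T).card = 2 :=
  ballE (by decide)

set_option maxHeartbeats 1000000 in
lemma hOri1 : ∀ T ∈ Kdef, ∀ a ∈ T, ∀ b ∈ T, a ≠ b → oriFun T a b = !oriFun T b a :=
  ballK (by decide)

set_option maxHeartbeats 4000000 in
lemma hOri2' : ∀ T ∈ Kdef, ∀ a ∈ T, ∀ b ∈ T, ∀ c ∈ T,
    a ≠ b → b ≠ c → a ≠ c → T = {a, b, c} → oriFun T a b = oriFun T b c :=
  ballK (by decide)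

lemma hOri2 : ∀ T ∈ Kdef, ∀ a b c : Fin 18,
    a ≠ b → b ≠ c → a ≠ c → T = {a, b, c} → oriFun T a b = oriFun T b c := by
  intro T hT a b c hab hbc hac hEq
  exact hOri2' T hT a (by rw [hEq]; simp) b (by rw [hEq]; simp) c (by rw [hEq]; simp)
    hab hbc hac hEq

set_option maxHeartbeats 4000000 in
lemma hOri3' : ∀ T ∈ Kdef, ∀ T' ∈ Kdef, T ≠ T' →
    ∀ a ∈ T, ∀ b ∈ T, a ≠ b → a ∈ T' → b ∈ T' → oriFun T a b = oriFun T' b a :=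
  ballK2 (by decide)

lemma hOri3 : ∀ T ∈ Kdef, ∀ T' ∈ Kdef, T ≠ T' → ∀ a b : Fin 18,
    a ≠ b → a ∈ T → b ∈ T → a ∈ T' → b ∈ T' → oriFun T a b = oriFun T' b a := by
  intro T hT T' hT' hne a b hab haT hbT haT' hbT'
  exact hOri3' T hT T' hT' hne a haT b hbT hab haT' hbT'

set_option maxHeartbeats 1000000 in
lemma hCS : IsCSOn (Finset.univ : Finset (Fin 18)) Kdef (fun v => v + 9) := by
  refine ⟨fun x _ => Finset.mem_coe.mpr (Finset.mem_univ _), fun v _ => ?_, ?_, fun v _ => ?_, ?_, ?_⟩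
  · revert v; decide
  · exact ballK (P := fun T => T.image (fun v => v + 9) ∈ Kdef) (by decide)
  · revert v; decide
  · exact ballE (P := fun e => e.image (fun v => v + 9) ≠ e) (by decide)
  · exact ballK (P := fun T => T.image (fun v => v + 9) ≠ T) (by decide)

lemma hE66 : (triEdges Kdef).card = 66 := by rw [triE_eq]; decide

lemma hK44 : Kdef.card = 44 := by decide

lemma hEuler : eulerCharOn (Finset.univ : Finset (Fin 18)) Kdef = -4 := by
  rw [eulerCharOn, hE66, hK44]
  decide

set_option maxHeartbeats 2000000 in
lemma link_0 : IsSingleCycle ((linkGraph Kdef (0 : Fin 18)).induce ((cplxGraph Kdef).neighborSet (0 : Fin 18))) :=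
  isSingleCycle_of _ ⟨(2 : Fin 18), by decide⟩
    (fun a => ([99, 99, 0, 99, 1, 99, 99, 99, 99, 99, 2, 99, 4, 99, 3, 99, 99, 99] : List ℕ).getD a.val.val 0) (by decide) (by decide)

set_option maxHeartbeats 2000000 in
lemma link_1 : IsSingleCycle ((linkGraph Kdef (1 : Fin 18)).induce ((cplxGraph Kdef).neighborSet (1 : Fin 18))) :=
  isSingleCycle_of _ ⟨(3 : Fin 18), by decide⟩
    (fun a => ([99, 99, 99, 0, 99, 5, 99, 7, 99, 1, 99, 3, 99, 2, 99, 4, 99, 6] : List ℕ).getD a.val.val 0) (by decide) (by decide)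

set_option maxHeartbeats 2000000 in
lemma link_2 : IsSingleCycle ((linkGraph Kdef (2 : Fin 18)).induce ((cplxGraph Kdef).neighborSet (2 : Fin 18))) :=
  isSingleCycle_of _ ⟨(0 : Fin 18), by decide⟩
    (fun a => ([0, 99, 99, 7, 1, 99, 3, 5, 6, 99, 2, 99, 99, 99, 4, 99, 99, 99] : List ℕ).getD a.val.val 0) (by decide) (by decide)

set_option maxHeartbeats 2000000 in
lemma link_3 : IsSingleCycle ((linkGraph Kdef (3 : Fin 18)).induce ((cplxGraph Kdef).neighborSet (3 : Fin 18))) :=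
  isSingleCycle_of _ ⟨(1 : Fin 18), by decide⟩
    (fun a => ([99, 0, 6, 99, 99, 3, 5, 4, 7, 1, 99, 99, 99, 2, 99, 99, 99, 99] : List ℕ).getD a.val.val 0) (by decide) (by decide)

set_option maxHeartbeats 2000000 in
lemma link_4 : IsSingleCycle ((linkGraph Kdef (4 : Fin 18)).induce ((cplxGraph Kdef).neighborSet (4 : Fin 18))) :=
  isSingleCycle_of _ ⟨(0 : Fin 18), by decide⟩
    (fun a => ([0, 99, 1, 99, 99, 99, 3, 99, 4, 99, 5, 99, 7, 99, 2, 99, 6, 99] : List ℕ).getD a.val.val 0) (by decide) (by decide)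

set_option maxHeartbeats 2000000 in
lemma link_5 : IsSingleCycle ((linkGraph Kdef (5 : Fin 18)).induce ((cplxGraph Kdef).neighborSet (5 : Fin 18))) :=
  isSingleCycle_of _ ⟨(1 : Fin 18), by decide⟩
    (fun a => ([99, 0, 99, 5, 99, 99, 3, 1, 99, 7, 99, 2, 99, 6, 99, 99, 99, 4] : List ℕ).getD a.val.val 0) (by decide) (by decide)

set_option maxHeartbeats 2000000 in
lemma link_6 : IsSingleCycle ((linkGraph Kdef (6 : Fin 18)).induce ((cplxGraph Kdef).neighborSet (6 : Fin 18))) :=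
  isSingleCycle_of _ ⟨(2 : Fin 18), by decide⟩
    (fun a => ([99, 99, 0, 6, 1, 4, 99, 2, 5, 99, 3, 99, 99, 99, 99, 99, 99, 99] : List ℕ).getD a.val.val 0) (by decide) (by decide)

set_option maxHeartbeats 2000000 in
lemma link_7 : IsSingleCycle ((linkGraph Kdef (7 : Fin 18)).induce ((cplxGraph Kdef).neighborSet (7 : Fin 18))) :=
  isSingleCycle_of _ ⟨(1 : Fin 18), by decide⟩
    (fun a => ([99, 0, 5, 6, 99, 1, 3, 99, 99, 99, 99, 99, 99, 4, 99, 99, 99, 2] : List ℕ).getD a.val.val 0) (by decide) (by decide)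

set_option maxHeartbeats 2000000 in
lemma link_8 : IsSingleCycle ((linkGraph Kdef (8 : Fin 18)).induce ((cplxGraph Kdef).neighborSet (8 : Fin 18))) :=
  isSingleCycle_of _ ⟨(2 : Fin 18), by decide⟩
    (fun a => ([99, 99, 0, 1, 4, 99, 3, 99, 99, 99, 5, 99, 99, 99, 2, 99, 6, 99] : List ℕ).getD a.val.val 0) (by decide) (by decide)

set_option maxHeartbeats 2000000 in
lemma link_9 : IsSingleCycle ((linkGraph Kdef (9 : Fin 18)).induce ((cplxGraph Kdef).neighborSet (9 : Fin 18))) :=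
  isSingleCycle_of _ ⟨(1 : Fin 18), by decide⟩
    (fun a => ([99, 0, 99, 1, 99, 3, 99, 99, 99, 99, 99, 2, 99, 4, 99, 99, 99, 99] : List ℕ).getD a.val.val 0) (by decide) (by decide)

set_option maxHeartbeats 2000000 in
lemma link_10 : IsSingleCycle ((linkGraph Kdef (10 : Fin 18)).induce ((cplxGraph Kdef).neighborSet (10 : Fin 18))) :=
  isSingleCycle_of _ ⟨(0 : Fin 18), by decide⟩
    (fun a => ([0, 99, 1, 99, 4, 99, 6, 99, 7, 99, 99, 99, 2, 99, 3, 99, 5, 99] : List ℕ).getD a.val.val 0) (by decide) (by decide)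

set_option maxHeartbeats 2000000 in
lemma link_11 : IsSingleCycle ((linkGraph Kdef (11 : Fin 18)).induce ((cplxGraph Kdef).neighborSet (11 : Fin 18))) :=
  isSingleCycle_of _ ⟨(1 : Fin 18), by decide⟩
    (fun a => ([99, 0, 99, 99, 99, 1, 99, 99, 99, 2, 99, 99, 5, 4, 99, 6, 7, 3] : List ℕ).getD a.val.val 0) (by decide) (by decide)

set_option maxHeartbeats 2000000 in
lemma link_12 : IsSingleCycle ((linkGraph Kdef (12 : Fin 18)).induce ((cplxGraph Kdef).neighborSet (12 : Fin 18))) :=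
  isSingleCycle_of _ ⟨(0 : Fin 18), by decide⟩
    (fun a => ([0, 99, 99, 99, 3, 99, 99, 99, 99, 99, 1, 7, 99, 99, 2, 4, 5, 6] : List ℕ).getD a.val.val 0) (by decide) (by decide)

set_option maxHeartbeats 2000000 in
lemma link_13 : IsSingleCycle ((linkGraph Kdef (13 : Fin 18)).induce ((cplxGraph Kdef).neighborSet (13 : Fin 18))) :=
  isSingleCycle_of _ ⟨(1 : Fin 18), by decide⟩
    (fun a => ([99, 0, 99, 1, 99, 7, 99, 3, 99, 6, 99, 4, 99, 99, 99, 2, 99, 5] : List ℕ).getD a.val.val 0) (by decide) (by decide)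

set_option maxHeartbeats 2000000 in
lemma link_14 : IsSingleCycle ((linkGraph Kdef (14 : Fin 18)).induce ((cplxGraph Kdef).neighborSet (14 : Fin 18))) :=
  isSingleCycle_of _ ⟨(0 : Fin 18), by decide⟩
    (fun a => ([0, 99, 5, 99, 1, 99, 99, 99, 3, 99, 7, 99, 2, 99, 99, 4, 6, 99] : List ℕ).getD a.val.val 0) (by decide) (by decide)

set_option maxHeartbeats 2000000 in
lemma link_15 : IsSingleCycle ((linkGraph Kdef (15 : Fin 18)).induce ((cplxGraph Kdef).neighborSet (15 : Fin 18))) :=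
  isSingleCycle_of _ ⟨(1 : Fin 18), by decide⟩
    (fun a => ([99, 0, 99, 99, 99, 99, 99, 99, 99, 99, 99, 3, 4, 1, 6, 99, 5, 2] : List ℕ).getD a.val.val 0) (by decide) (by decide)

set_option maxHeartbeats 2000000 in
lemma link_16 : IsSingleCycle ((linkGraph Kdef (16 : Fin 18)).induce ((cplxGraph Kdef).neighborSet (16 : Fin 18))) :=
  isSingleCycle_of _ ⟨(4 : Fin 18), by decide⟩
    (fun a => ([99, 99, 99, 99, 0, 99, 99, 99, 1, 99, 3, 4, 2, 99, 5, 6, 99, 99] : List ℕ).getD a.val.val 0) (by decide) (by decide)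

set_option maxHeartbeats 2000000 in
lemma link_17 : IsSingleCycle ((linkGraph Kdef (17 : Fin 18)).induce ((cplxGraph Kdef).neighborSet (17 : Fin 18))) :=
  isSingleCycle_of _ ⟨(1 : Fin 18), by decide⟩
    (fun a => ([99, 0, 99, 99, 99, 5, 99, 1, 99, 99, 99, 6, 4, 3, 99, 2, 99, 99] : List ℕ).getD a.val.val 0) (by decide) (by decide)

set_option maxHeartbeats 2000000 in
lemma linkAll : ∀ v : Fin 18,
    IsSingleCycle ((linkGraph Kdef v).induce ((cplxGraph Kdef).neighborSet v)) := by
  intro v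
  fin_cases v
  · exact link_0
  · exact link_1
  · exact link_2
  · exact link_3
  · exact link_4
  · exact link_5
  · exact link_6
  · exact link_7
  · exact link_8
  · exact link_9
  · exact link_10
  · exact link_11
  · exact link_12
  · exact link_13
  · exact link_14
  · exact link_15
  · exact link_16
  · exact link_17

set_option maxHeartbeats 2000000 in
lemma amb_conn : ((cplxGraph Kdef).induce ((Finset.univ : Finset (Fin 18)) : Set (Fin 18))).Connected :=
  connected_of_rank _ ⟨(0 : Fin 18), by decide⟩
    (fun a => ([0, 14, 1, 6, 2, 15, 7, 8, 9, 16, 3, 11, 4, 17, 5, 12, 10, 13] : List ℕ).getD a.val.val 0) (by decide)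

/-- There exists a centrally symmetric orientable triangulated closed surface with
exactly 18 vertices, 66 edges, 44 triangles and Euler characteristic -4 (genus 2). -/
theorem exists_CS_orientable_genus_two_triangulation :
    ∃ K : Finset (Finset (Fin 18)),
      IsTriSurfaceOn Finset.univ K ∧
      IsOrientableTri K ∧
      (∃ σ : Fin 18 → Fin 18, IsCSOn Finset.univ K σ) ∧
      (triEdges K).card = 66 ∧ K.card = 44 ∧
      eulerCharOn Finset.univ K = -4 :=
  ⟨Kdef, ⟨hFaces, amb_conn, hEdge2, fun v _ => linkAll v⟩,
    ⟨oriFun, hOri1, hOri2, hOri3⟩, ⟨fun v => v + 9, hCS⟩, hE66, hK44, hEuler⟩
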